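/- For all integers k ≥ 1 and n ≥ 1, the number of k-box paths of size n equals the number of (k+1)_k-Dyck paths of size n − 1. -/

import Mathlib

/-- The step alphabet for skew Dyck paths: up, down, left. -/
inductive Step : Type
  | U | D | L
  deriving DecidableEq

/-- Number of U steps in a word. -/
def countU (w : List Step) : ℕ := w.count Step.U
/-- Number of D steps in a word. -/
def countD (w : List Step) : ℕ := w.count Step.D
/-- Number of L steps in a word. -/
def countL (w : List Step) : ℕ := w.count Step.L

/-- A skew Dyck path: every prefix has at least as many U's as D's and L's combined,
the totals balance, and there is no factor `UL` or `LU`. -/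
def IsSkewDyck (w : List Step) : Prop :=
  (∀ p, p <+: w → countD p + countL p ≤ countU p) ∧
  countU w = countD w + countL w ∧
  ¬ [Step.U, Step.L] <:+: w ∧ ¬ [Step.L, Step.U] <:+: w

/-- The semilength of a skew Dyck path is its number of U's. -/
def semilength (w : List Step) : ℕ := countU w

/-- The factor `U D^k L`. -/
def boxFactor (k : ℕ) : List Step := Step.U :: (List.replicate k Step.D ++ [Step.L])

/-- The number of occurrences (starting positions) of `f` as a factor (contiguous
subword) of `w`. -/
def numOccurrences (f w : List Step) : ℕ :=
  ((Finset.range (w.length + 1)).filter (fun i => f <+: w.drop i)).card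

/-- A `k`-box path of size `n`: a skew Dyck path of semilength `(k+2)n - 1` with
exactly `n` occurrences of the factor `U D^k L`. -/
def IsBoxPath (k n : ℕ) (w : List Step) : Prop :=
  IsSkewDyck w ∧ semilength w = (k+2)*n - 1 ∧ numOccurrences (boxFactor k) w = n

/-- Number of returns: positions `i` such that the `(i+1)`-st letter is a `D` or `L`
and the prefix of length `i+1` is balanced (the path returns to the x-axis). -/
def numReturns (w : List Step) : ℕ :=
  ((Finset.range w.length).filter (fun i =>
    (w[i]? = some Step.D ∨ w[i]? = some Step.L) ∧
    countU (w.take (i+1)) = countD (w.take (i+1)) + countL (w.take (i+1)))).card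

/-- Number of long ascents: maximal runs of consecutive U's of length at least 2,
counted via their starting positions. -/
def numLongAscents (w : List Step) : ℕ :=
  ((Finset.range w.length).filter (fun i =>
    w[i]? = some Step.U ∧ w[i+1]? = some Step.U ∧
    (i = 0 ∨ w[i-1]? ≠ some Step.U))).card

/-- The word `U^{a_1} D^k L D U^{a_2} D^k L D ⋯ U^{a_{n-1}} D^k L D U^{a_n} D^k L`. -/
def boxForm (k : ℕ) : List ℕ → List Step
  | [] => []
  | [a] => List.replicate a Step.U ++ List.replicate k Step.D ++ [Step.L]
  | a :: b :: rest =>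
      List.replicate a Step.U ++ List.replicate k Step.D ++ [Step.L, Step.D] ++
        boxForm k (b :: rest)

/-- A block `U^b D^{k-1} L D` of an augmented `k`-Dyck path. -/
def augBlock (k b : ℕ) : List Step :=
  List.replicate b Step.U ++ List.replicate (k-1) Step.D ++ [Step.L, Step.D]

/-- The word `U^{b_1} D^{k-1} L D ⋯ U^{b_m} D^{k-1} L D`. -/
def augForm (k : ℕ) (b : List ℕ) : List Step := (b.map (augBlock k)).flatten

/-- An augmented `k`-Dyck path: a skew Dyck path of the form
`U^{b_1} D^{k-1} L D ⋯ U^{b_m} D^{k-1} L D` with all `b_i` positive. -/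
def IsAugmented (k : ℕ) (w : List Step) : Prop :=
  IsSkewDyck w ∧ ∃ b : List ℕ, (∀ x ∈ b, 0 < x) ∧ w = augForm k b

/-- An augmented `k`-Dyck path of size `m`. -/
def IsAugmentedOfSize (k m : ℕ) (w : List Step) : Prop :=
  IsSkewDyck w ∧ ∃ b : List ℕ, b.length = m ∧ (∀ x ∈ b, 0 < x) ∧ w = augForm k b

/-- A tailed `k`-box path ends with the factor `U^{k+1} D^k L`. -/
def Tailed (k : ℕ) (w : List Step) : Prop :=
  (List.replicate (k+1) Step.U ++ List.replicate k Step.D ++ [Step.L]) <:+ w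

/-- A `K_t`-Dyck path of size `m`: a word with `K·m` up steps (`true`, value `+1`)
and `m` down steps (`false`, value `-K`) such that every partial sum is at
least `-t`. -/
def IsKtDyck (K t m : ℕ) (w : List Bool) : Prop :=
  w.count true = K * m ∧ w.count false = m ∧
  ∀ p, p <+: w → -(t : ℤ) ≤ (p.count true : ℤ) - (K : ℤ) * (p.count false : ℤ)



section Aux
variable {α : Type*}

lemma prefix_append_cases {p l1 l2 : List α} (h : p <+: l1 ++ l2) :
    p <+: l1 ∨ ∃ r, r <+: l2 ∧ p = l1 ++ r := by
  have hp := List.prefix_iff_eq_take.1 h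
  rw [List.take_append] at hp
  rcases le_or_gt p.length l1.length with hl | hl
  · left
    have : p.length - l1.length = 0 := by omega
    rw [this] at hp
    simp at hp
    exact hp ▸ List.take_prefix _ _
  · right
    refine ⟨l2.take (p.length - l1.length), List.take_prefix _ _, ?_⟩
    rwa [List.take_of_length_le (by omega)] at hp

lemma getElem?_of_prefix {p l : List α} (h : p <+: l) {i : ℕ} {a : α}
    (hi : p[i]? = some a) : l[i]? = some a := by
  obtain ⟨t, rfl⟩ := h
  have hlt : i < p.length := by
    by_contra hc
    rw [List.getElem?_eq_none (by omega)] at hi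
    cases hi
  rwa [List.getElem?_append_left hlt]

lemma pair_infix {w : List α} {c c' : α} {p : ℕ}
    (h1 : w[p]? = some c) (h2 : w[p+1]? = some c') : [c, c'] <:+: w := by
  have hd : (w.drop p)[0]? = some c := by rw [List.getElem?_drop]; simpa using h1
  have hd2 : (w.drop p)[1]? = some c' := by rw [List.getElem?_drop]; simpa using h2
  rcases hl : w.drop p with _ | ⟨a, l1⟩
  · rw [hl] at hd; simp at hd
  · rw [hl] at hd hd2
    simp at hd
    rcases l1 with _ | ⟨b, l2⟩
    · simp at hd2
    · simp at hd2
      refine ⟨w.take p, l2, ?_⟩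
      rw [← hd, ← hd2]
      conv_rhs => rw [← List.take_append_drop p w, hl]
      simp

lemma count_eq_card_filter [DecidableEq α] (w : List α) (c : α) :
    w.count c = ((Finset.range w.length).filter (fun p => w[p]? = some c)).card := by
  induction w using List.reverseRecOn with
  | nil => simp
  | append_singleton w a ih =>
    rw [List.length_append, List.length_singleton, Finset.range_add_one, Finset.filter_insert]
    have hlast : (w ++ [a])[w.length]? = some a := by
      rw [List.getElem?_append_right (le_refl _)]
      simp
    have hfilter : ((Finset.range w.length).filter (fun p => (w ++ [a])[p]? = some c)) =
        ((Finset.range w.length).filter (fun p => w[p]? = some c)) := by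
      apply Finset.filter_congr
      intro p hp
      rw [Finset.mem_range] at hp
      simp [List.getElem?_append_left hp]
    by_cases hac : a = c
    · subst hac
      rw [if_pos hlast, Finset.card_insert_of_notMem (by simp), hfilter, ← ih]
      simp
    · rw [if_neg (by rw [hlast]; simp [hac]), hfilter, ← ih]
      simp [List.count_singleton', hac]

end Aux

section StepBasics

lemma length_eq_counts (w : List Step) : w.length = countU w + countD w + countL w := by
  induction w with
  | nil => simp [countU, countD, countL]
  | cons a t ih =>
    cases a <;> simp [countU, countD, countL, List.count_cons] at ih ⊢ <;> omega

lemma boxFactor_length (k : ℕ) : (boxFactor k).length = k + 2 := by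
  simp [boxFactor]

lemma boxFactor_getElem?_zero (k : ℕ) : (boxFactor k)[0]? = some Step.U := by
  simp [boxFactor]

lemma boxFactor_getElem?_mid (k d : ℕ) (h1 : 1 ≤ d) (h2 : d ≤ k) :
    (boxFactor k)[d]? = some Step.D := by
  obtain ⟨e, rfl⟩ : ∃ e, d = e + 1 := ⟨d - 1, by omega⟩
  simp only [boxFactor, List.getElem?_cons_succ]
  rw [List.getElem?_append_left (by simp; omega), List.getElem?_replicate, if_pos (by omega)]

lemma boxFactor_getElem?_last (k : ℕ) : (boxFactor k)[k+1]? = some Step.L := by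
  simp only [boxFactor, List.getElem?_cons_succ]
  rw [List.getElem?_append_right (by simp), List.length_replicate]
  simp

lemma occ_le_len {k : ℕ} {w : List Step} {i : ℕ} (h : boxFactor k <+: w.drop i) :
    i + (k + 2) ≤ w.length := by
  have := h.length_le
  rw [boxFactor_length, List.length_drop] at this
  omega

lemma occ_getElem? {k : ℕ} {w : List Step} {i : ℕ} (h : boxFactor k <+: w.drop i)
    {j : ℕ} {c : Step} (hj : (boxFactor k)[j]? = some c) : w[i + j]? = some c := by
  have := getElem?_of_prefix h hj
  rwa [List.getElem?_drop] at this

lemma occ_U {k : ℕ} {w : List Step} {i : ℕ} (h : boxFactor k <+: w.drop i) :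
    w[i]? = some Step.U := by
  have := occ_getElem? h (boxFactor_getElem?_zero k)
  simpa using this

lemma occ_D {k : ℕ} {w : List Step} {i : ℕ} (h : boxFactor k <+: w.drop i)
    {d : ℕ} (h1 : 1 ≤ d) (h2 : d ≤ k) : w[i + d]? = some Step.D :=
  occ_getElem? h (boxFactor_getElem?_mid k d h1 h2)

lemma occ_L {k : ℕ} {w : List Step} {i : ℕ} (h : boxFactor k <+: w.drop i) :
    w[i + (k+1)]? = some Step.L :=
  occ_getElem? h (boxFactor_getElem?_last k)

end StepBasics

section SDpre

/-- prefix condition with slack `t` -/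
def SDpre (t : ℕ) (w : List Step) : Prop :=
  ∀ p, p <+: w → countD p + countL p ≤ countU p + t

lemma SDpre_nil (t : ℕ) : SDpre t [] := by
  intro p hp
  rw [List.prefix_nil.mp hp]
  simp [countU, countD, countL]

lemma sdpre_counts_mono {p : List Step} (hU : ∀ b ∈ p, b = Step.U) :
    countD p = 0 ∧ countL p = 0 := by
  constructor
  · rw [countD, List.count_eq_zero]
    intro hc
    exact absurd (hU _ hc) (by simp)
  · rw [countL, List.count_eq_zero]
    intro hc
    exact absurd (hU _ hc) (by simp)

lemma SDpre_replicate_U {t x : ℕ} {w : List Step} :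
    SDpre t (List.replicate x Step.U ++ w) ↔ SDpre (t + x) w := by
  constructor
  · intro H p hp
    have := H (List.replicate x Step.U ++ p) ((List.prefix_append_right_inj _).mpr hp)
    simp only [countU, countD, countL, List.count_append, List.count_replicate] at this ⊢
    simp at this
    omega
  · intro H p hp
    rcases prefix_append_cases hp with h | ⟨r, hr, rfl⟩
    · have hU : ∀ b ∈ p, b = Step.U := by
        intro b hb
        have := h.sublist.subset hb
        simpa using List.eq_of_mem_replicate this
      obtain ⟨h1, h2⟩ := sdpre_counts_mono hU
      omega
    · have := H r hr
      simp only [countU, countD, countL, List.count_append, List.count_replicate] at this ⊢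
      simp
      omega

lemma SDpre_replicate_D {t x : ℕ} {w : List Step} :
    SDpre t (List.replicate x Step.D ++ w) ↔ x ≤ t ∧ SDpre (t - x) w := by
  constructor
  · intro H
    have hx := H (List.replicate x Step.D) (List.prefix_append _ _)
    simp only [countU, countD, countL, List.count_replicate] at hx
    simp at hx
    refine ⟨by omega, ?_⟩
    intro p hp
    have := H (List.replicate x Step.D ++ p) ((List.prefix_append_right_inj _).mpr hp)
    simp only [countU, countD, countL, List.count_append, List.count_replicate] at this ⊢
    simp at this
    omega
  · rintro ⟨hx, H⟩ p hp
    rcases prefix_append_cases hp with h | ⟨r, hr, rfl⟩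
    · have hD : ∀ b ∈ p, b = Step.D := by
        intro b hb
        have := h.sublist.subset hb
        simpa using List.eq_of_mem_replicate this
      have h1 : countL p = 0 := by
        rw [countL, List.count_eq_zero]; intro hc; exact absurd (hD _ hc) (by simp)
      have h2 : countD p ≤ x := by
        have := List.count_le_length (l := p) (a := Step.D)
        have hl := h.length_le
        simp at hl
        simp only [countD]
        omega
      omega
    · have := H r hr
      simp only [countU, countD, countL, List.count_append, List.count_replicate] at this ⊢
      simp
      omega

lemma SDpre_cons_L {t : ℕ} {w : List Step} :
    SDpre t (Step.L :: w) ↔ 1 ≤ t ∧ SDpre (t - 1) w := by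
  constructor
  · intro H
    have h1 := H [Step.L] ⟨w, rfl⟩
    simp [countU, countD, countL] at h1
    refine ⟨by omega, ?_⟩
    intro p hp
    have := H (Step.L :: p) (by
      rw [show Step.L :: p = [Step.L] ++ p by rfl, show Step.L :: w = [Step.L] ++ w by rfl]
      exact (List.prefix_append_right_inj [Step.L]).mpr hp)
    simp only [countU, countD, countL, List.count_cons] at this ⊢
    simp at this
    omega
  · rintro ⟨hx, H⟩ p hp
    rw [show Step.L :: w = [Step.L] ++ w by rfl] at hp
    rcases prefix_append_cases hp with h | ⟨r, hr, rfl⟩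
    · rcases h with ⟨t2, ht2⟩
      match p, ht2 with
      | [], _ => simp [countU, countD, countL]
      | [Step.L], _ =>
        simp [countU, countD, countL]
        omega
    · have := H r hr
      simp only [countU, countD, countL, List.count_append, List.count_cons] at this ⊢
      simp at this ⊢
      omega

end SDpre

section BoxFormBasics

lemma boxForm_single (k x : ℕ) :
    boxForm k [x] = List.replicate x Step.U ++ (List.replicate k Step.D ++ [Step.L]) := by
  simp [boxForm]

lemma boxForm_cons_cons (k x y : ℕ) (r : List ℕ) :
    boxForm k (x :: y :: r) = List.replicate x Step.U ++ (List.replicate k Step.D ++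
      (Step.L :: Step.D :: boxForm k (y :: r))) := by
  simp [boxForm]

lemma boxForm_eq_replicate_append_boxFactor (k x : ℕ) (hx : 1 ≤ x) :
    boxForm k [x] = List.replicate (x-1) Step.U ++ boxFactor k := by
  rw [boxForm_single, boxFactor]
  rw [show x = (x-1) + 1 by omega, List.replicate_succ']
  simp

lemma boxForm_cons_cons_eq_replicate_append (k x y : ℕ) (r : List ℕ) (hx : 1 ≤ x) :
    boxForm k (x :: y :: r) = List.replicate (x-1) Step.U ++
      (boxFactor k ++ (Step.D :: boxForm k (y :: r))) := by
  rw [boxForm_cons_cons, boxFactor]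
  rw [show x = (x-1) + 1 by omega, List.replicate_succ']
  simp

lemma counts_boxForm (k : ℕ) : ∀ (a : List ℕ), a ≠ [] →
    countU (boxForm k a) = a.sum ∧ countD (boxForm k a) + 1 = (k+1) * a.length ∧
    countL (boxForm k a) = a.length := by
  intro a
  induction a with
  | nil => intro h; exact absurd rfl h
  | cons x r ih =>
    intro _
    cases r with
    | nil =>
      simp [boxForm_single, countU, countD, countL, List.count_append, List.count_replicate]
    | cons y r' =>
      obtain ⟨h1, h2, h3⟩ := ih (by simp)
      simp only [countU, countD, countL] at h1 h2 h3
      simp only [boxForm_cons_cons, countU, countD, countL, List.count_append,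
        List.count_replicate, List.count_cons]
      simp at h1 h2 h3 ⊢
      refine ⟨by omega, ?_, by omega⟩
      have e1 : (k+1) * (r'.length + 1 + 1) = (k+1) * (r'.length + 1) + (k+1) := by ring
      omega

lemma SDpre_cons_D {t : ℕ} {w : List Step} :
    SDpre t (Step.D :: w) ↔ 1 ≤ t ∧ SDpre (t - 1) w := by
  have := SDpre_replicate_D (t := t) (x := 1) (w := w)
  simpa using this

lemma SDpre_nil_iff (t : ℕ) : SDpre t ([] : List Step) ↔ True :=
  iff_true_intro (SDpre_nil t)

lemma SDpre_boxForm (k : ℕ) : ∀ (a : List ℕ), a ≠ [] → ∀ (t : ℕ),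
    (SDpre t (boxForm k a) ↔
      ((∀ j, 1 ≤ j → j < a.length → (k+2)*j ≤ t + (a.take j).sum) ∧
       (k+2)*a.length ≤ t + a.sum + 1)) := by
  intro a
  induction a with
  | nil => intro h; exact absurd rfl h
  | cons x r ih =>
    intro _ t
    cases r with
    | nil =>
      rw [boxForm_single, SDpre_replicate_U, SDpre_replicate_D, SDpre_cons_L, SDpre_nil_iff]
      constructor
      · rintro ⟨h1, h2, -⟩
        refine ⟨by intro j hj1 hj2; simp at hj2; omega, ?_⟩
        simp
        omega
      · rintro ⟨-, hF⟩
        simp at hF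
        refine ⟨by omega, by omega, trivial⟩
    | cons y r' =>
      rw [boxForm_cons_cons, SDpre_replicate_U, SDpre_replicate_D, SDpre_cons_L, SDpre_cons_D,
        ih (by simp)]
      constructor
      · rintro ⟨h1, h2, h3, hC, hF⟩
        have hg : k + 2 ≤ t + x := by omega
        constructor
        · intro j hj1 hj2
          obtain ⟨j', rfl⟩ : ∃ j', j = 1 + j' := ⟨j - 1, by omega⟩
          cases j' with
          | zero =>
            simp
            omega
          | succ m =>
            have hc := hC (m+1) (by omega) (by simp at hj2 ⊢; omega)
            have e2 : (x :: y :: r').take (1 + (m+1)) = x :: ((y :: r').take (m+1)) := by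
              rw [Nat.add_comm, List.take_succ_cons]
            rw [e2]
            have e1 : (k+2) * (1 + (m+1)) = (k+2) * (m+1) + (k+2) := by ring
            rw [e1]
            simp only [List.sum_cons]
            generalize (k+2) * (m+1) = P at hc ⊢
            omega
        · have e1 : (k+2) * ((x :: y :: r').length) = (k+2) * ((y :: r').length) + (k+2) := by
            simp only [List.length_cons]
            ring
          rw [e1]
          simp only [List.sum_cons] at hF ⊢
          generalize (k+2) * ((y :: r').length) = P at hF ⊢
          omega
      · rintro ⟨hC, hF⟩
        have hg : k + 2 ≤ t + x := by
          have := hC 1 (by omega) (by simp)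
          simpa using this
        refine ⟨by omega, by omega, by omega, ?_, ?_⟩
        · intro j hj1 hj2
          have hc := hC (j+1) (by omega) (by simp at hj2 ⊢; omega)
          have e2 : (x :: y :: r').take (j+1) = x :: ((y :: r').take j) := List.take_succ_cons
          rw [e2] at hc
          have e1 : (k+2) * (j + 1) = (k+2) * j + (k+2) := by ring
          rw [e1] at hc
          simp only [List.sum_cons] at hc
          generalize (k+2) * j = P at hc ⊢
          omega
        · have e1 : (k+2) * ((x :: y :: r').length) = (k+2) * ((y :: r').length) + (k+2) := by
            simp only [List.length_cons]
            ring
          rw [e1] at hF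
          simp only [List.sum_cons] at hF ⊢
          generalize (k+2) * ((y :: r').length) = P at hF ⊢
          omega

end BoxFormBasics

section ChainSec

/-- adjacent pairs allowed in a skew Dyck path -/
def okPair : Step → Step → Prop := fun x y =>
  ¬(x = Step.U ∧ y = Step.L) ∧ ¬(x = Step.L ∧ y = Step.U)

lemma chain'_replicate_ok (c : Step) (hc : okPair c c) (m : ℕ) :
    List.Chain' okPair (List.replicate m c) := by
  induction m with
  | zero => simp [List.Chain']
  | succ i ih =>
    rw [List.replicate_succ]
    refine List.IsChain.cons ih ?_
    intro y hy
    have : y = c := by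
      cases i with
      | zero => simp at hy
      | succ i' => rw [List.replicate_succ] at hy; simp at hy; exact hy.symm ▸ rfl
    exact this ▸ hc

lemma replicate_getLast?_U {x : ℕ} {c : Step} (h : c ∈ (List.replicate x Step.U).getLast?) :
    c = Step.U := by
  have := List.mem_of_mem_getLast? h
  exact List.eq_of_mem_replicate this

lemma chain'_boxForm (k : ℕ) (hk : 1 ≤ k) : ∀ (a : List ℕ),
    List.Chain' okPair (boxForm k a) := by
  intro a
  induction a with
  | nil => simp [boxForm, List.Chain']
  | cons x r ih =>
    cases r with
    | nil =>
      rw [boxForm_single]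
      refine List.IsChain.append (chain'_replicate_ok _ (by simp [okPair]) _) ?_ ?_
      · refine List.IsChain.append (chain'_replicate_ok _ (by simp [okPair]) _) (by simp) ?_
        intro c hc d hd
        have hc' : c = Step.D := List.eq_of_mem_replicate (List.mem_of_mem_getLast? hc)
        simp at hd
        subst hc' hd
        simp [okPair]
      · intro c hc d hd
        have hc' : c = Step.U := replicate_getLast?_U hc
        obtain ⟨k', rfl⟩ : ∃ k', k = k' + 1 := ⟨k - 1, by omega⟩
        rw [List.replicate_succ] at hd
        simp at hd
        subst hc' hd
        simp [okPair]
    | cons y r' =>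
      rw [boxForm_cons_cons]
      refine List.IsChain.append (chain'_replicate_ok _ (by simp [okPair]) _) ?_ ?_
      · refine List.IsChain.append (chain'_replicate_ok _ (by simp [okPair]) _) ?_ ?_
        · rw [List.isChain_cons_cons]
          refine ⟨by simp [okPair], ?_⟩
          refine List.IsChain.cons ih ?_
          intro d _
          simp [okPair]
        · intro c hc d hd
          have hc' : c = Step.D := List.eq_of_mem_replicate (List.mem_of_mem_getLast? hc)
          simp at hd
          subst hc' hd
          simp [okPair]
      · intro c hc d hd
        have hc' : c = Step.U := replicate_getLast?_U hc
        obtain ⟨k', rfl⟩ : ∃ k', k = k' + 1 := ⟨k - 1, by omega⟩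
        rw [List.replicate_succ] at hd
        simp at hd
        subst hc' hd
        simp [okPair]

lemma no_factor_of_chain' {w : List Step} (h : List.Chain' okPair w) :
    ¬ [Step.U, Step.L] <:+: w ∧ ¬ [Step.L, Step.U] <:+: w := by
  constructor
  · intro hinf
    have := h.infix hinf
    simp only [List.Chain', List.isChain_cons_cons] at this
    exact this.1.1 ⟨rfl, rfl⟩
  · intro hinf
    have := h.infix hinf
    simp only [List.Chain', List.isChain_cons_cons] at this
    exact this.1.2 ⟨rfl, rfl⟩

end ChainSec

section InjSec

lemma replicate_U_append_inj : ∀ (x x' : ℕ) (l l' : List Step),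
    List.replicate x Step.U ++ l = List.replicate x' Step.U ++ l' →
    l.head? ≠ some Step.U → l'.head? ≠ some Step.U → x = x' ∧ l = l' := by
  intro x
  induction x with
  | zero =>
    intro x' l l' h hl hl'
    cases x' with
    | zero => simpa using h
    | succ m =>
      exfalso
      rw [List.replicate_succ] at h
      simp at h
      rw [h] at hl
      simp at hl
  | succ m ih =>
    intro x' l l' h hl hl'
    cases x' with
    | zero =>
      exfalso
      rw [List.replicate_succ] at h
      simp at h
      rw [← h] at hl'
      simp at hl' 
    | succ m' =>
      rw [List.replicate_succ, List.replicate_succ] at h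
      simp at h
      obtain ⟨h1, h2⟩ := ih m' l l' h hl hl'
      exact ⟨by omega, h2⟩

end InjSec

section InjSec2

lemma head?_ne_U_of_D_start (k : ℕ) (hk : 1 ≤ k) (l : List Step) :
    (List.replicate k Step.D ++ l).head? ≠ some Step.U := by
  obtain ⟨k', rfl⟩ : ∃ k', k = k' + 1 := ⟨k - 1, by omega⟩
  rw [List.replicate_succ]
  simp

lemma boxForm_inj (k : ℕ) (hk : 1 ≤ k) : ∀ (a a' : List ℕ),
    boxForm k a = boxForm k a' → a = a' := by
  intro a
  induction a with
  | nil =>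
    intro a' h
    cases a' with
    | nil => rfl
    | cons x' r' =>
      exfalso
      cases r' with
      | nil => rw [boxForm_single] at h; simp [boxForm] at h
      | cons y' r'' => rw [boxForm_cons_cons] at h; simp [boxForm] at h
  | cons x r ih =>
    intro a' h
    cases a' with
    | nil =>
      exfalso
      cases r with
      | nil => rw [boxForm_single] at h; simp [boxForm] at h
      | cons y r'' => rw [boxForm_cons_cons] at h; simp [boxForm] at h
    | cons x' r' =>
      have hmain : x = x' ∧ (match r with
          | [] => List.replicate k Step.D ++ [Step.L]
          | y :: rr => List.replicate k Step.D ++ (Step.L :: Step.D :: boxForm k (y :: rr))) =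
          (match r' with
          | [] => List.replicate k Step.D ++ [Step.L]
          | y :: rr => List.replicate k Step.D ++ (Step.L :: Step.D :: boxForm k (y :: rr))) := by
        cases r with
        | nil =>
          cases r' with
          | nil =>
            rw [boxForm_single, boxForm_single] at h
            exact replicate_U_append_inj _ _ _ _ h (head?_ne_U_of_D_start k hk _)
              (head?_ne_U_of_D_start k hk _)
          | cons y' rr' =>
            rw [boxForm_single, boxForm_cons_cons] at h
            exact replicate_U_append_inj _ _ _ _ h (head?_ne_U_of_D_start k hk _)
              (head?_ne_U_of_D_start k hk _)
        | cons y rr =>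
          cases r' with
          | nil =>
            rw [boxForm_cons_cons, boxForm_single] at h
            exact replicate_U_append_inj _ _ _ _ h (head?_ne_U_of_D_start k hk _)
              (head?_ne_U_of_D_start k hk _)
          | cons y' rr' =>
            rw [boxForm_cons_cons, boxForm_cons_cons] at h
            exact replicate_U_append_inj _ _ _ _ h (head?_ne_U_of_D_start k hk _)
              (head?_ne_U_of_D_start k hk _)
      obtain ⟨hx, htail⟩ := hmain
      subst hx
      cases r with
      | nil =>
        cases r' with
        | nil => rfl
        | cons y' rr' =>
          exfalso
          simp at htail
      | cons y rr =>
        cases r' with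
        | nil =>
          exfalso
          simp at htail
        | cons y' rr' =>
          simp at htail
          have := ih (y' :: rr') htail
          rw [this]

end InjSec2

section OccSec

lemma L_pos_boxForm (k : ℕ) (hk : 1 ≤ k) : ∀ (a : List ℕ), (∀ z ∈ a, 1 ≤ z) → ∀ p,
    (boxForm k a)[p]? = some Step.L →
    k + 1 ≤ p ∧ boxFactor k <+: (boxForm k a).drop (p - (k+1)) := by
  intro a
  induction a with
  | nil => intro _ p hp; simp [boxForm] at hp
  | cons x r ih =>
    intro hpos p hp
    have hx : 1 ≤ x := hpos x (by simp)
    cases r with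
    | nil =>
      rw [boxForm_single, List.getElem?_append] at hp
      split_ifs at hp with h1
      · rw [List.getElem?_replicate, if_pos (by simpa using h1)] at hp
        simp at hp
      · rw [List.getElem?_append] at hp
        split_ifs at hp with h2
        · rw [List.getElem?_replicate, if_pos (by simpa using h2)] at hp
          simp at hp
        · simp only [List.length_replicate] at h1 h2
          have hq : p - x - k = 0 := by
            by_contra hc
            rw [List.getElem?_eq_none (by simp; omega)] at hp
            cases hp
          have hpeq : p = x + k := by omega
          refine ⟨by omega, ?_⟩
          rw [boxForm_eq_replicate_append_boxFactor k x hx,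
            show p - (k+1) = (List.replicate (x-1) Step.U).length by simp; omega,
            List.drop_left]
    | cons y r' =>
      rw [boxForm_cons_cons, List.getElem?_append] at hp
      split_ifs at hp with h1
      · rw [List.getElem?_replicate, if_pos (by simpa using h1)] at hp
        simp at hp
      · rw [List.getElem?_append] at hp
        split_ifs at hp with h2
        · rw [List.getElem?_replicate, if_pos (by simpa using h2)] at hp
          simp at hp
        · simp only [List.length_replicate] at h1 h2
          rcases hq : p - x - k with _ | m
          · have hpeq : p = x + k := by omega
            refine ⟨by omega, ?_⟩
            rw [boxForm_cons_cons_eq_replicate_append k x y r' hx,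
              show p - (k+1) = (List.replicate (x-1) Step.U).length by simp; omega,
              List.drop_left]
            exact List.prefix_append _ _
          · simp only [List.length_replicate] at hp
            cases m with
            | zero =>
              rw [hq] at hp
              simp at hp
            | succ m' =>
              rw [hq] at hp
              simp only [List.getElem?_cons_succ] at hp
              obtain ⟨hge, hocc⟩ := ih (fun z hz => hpos z (by simp [hz])) m' hp
              have hpval : p = x + k + 2 + m' := by omega
              refine ⟨by omega, ?_⟩
              have hw : boxForm k (x :: y :: r') =
                  (List.replicate x Step.U ++ List.replicate k Step.D ++ [Step.L, Step.D]) ++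
                    boxForm k (y :: r') := by
                simp [boxForm]
              rw [hw, show p - (k+1) =
                  (List.replicate x Step.U ++ List.replicate k Step.D ++ [Step.L, Step.D]).length
                    + (m' - (k+1)) by simp; omega,
                List.drop_append, List.drop_eq_nil_of_le (Nat.le_add_right _ _), List.nil_append,
                Nat.add_sub_cancel_left]
              exact hocc

lemma numOcc_boxForm (k : ℕ) (hk : 1 ≤ k) (a : List ℕ) (ha : a ≠ [])
    (hpos : ∀ z ∈ a, 1 ≤ z) :
    numOccurrences (boxFactor k) (boxForm k a) = a.length := by
  classical
  have hcountL : countL (boxForm k a) = a.length := (counts_boxForm k a ha).2.2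
  rw [numOccurrences]
  have hbij : (((Finset.range ((boxForm k a).length + 1)).filter
        (fun i => boxFactor k <+: (boxForm k a).drop i))).card
      = ((Finset.range (boxForm k a).length).filter
        (fun p => (boxForm k a)[p]? = some Step.L)).card := by
    apply Finset.card_bij (fun i _ => i + (k+1))
    · intro i hi
      simp only [Finset.mem_filter, Finset.mem_range] at hi ⊢
      obtain ⟨hi1, hi2⟩ := hi
      refine ⟨by have := occ_le_len hi2; omega, ?_⟩
      exact occ_L hi2
    · intro i hi j hj hij
      omega
    · intro p hp
      simp only [Finset.mem_filter, Finset.mem_range] at hp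
      obtain ⟨hp1, hp2⟩ := hp
      obtain ⟨hge, hocc⟩ := L_pos_boxForm k hk a hpos p hp2
      refine ⟨p - (k+1), ?_, by omega⟩
      simp only [Finset.mem_filter, Finset.mem_range]
      exact ⟨by omega, hocc⟩
  rw [hbij, ← count_eq_card_filter]
  exact hcountL

end OccSec

section Backward

lemma isBoxPath_boxForm (k n : ℕ) (hk : 1 ≤ k) (hn : 1 ≤ n) (a : List ℕ)
    (hlen : a.length = n) (hpos : ∀ z ∈ a, 1 ≤ z)
    (hpart : ∀ j, 1 ≤ j → j < n → (k+2)*j ≤ (a.take j).sum)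
    (hsum : a.sum = (k+2)*n - 1) :
    IsBoxPath k n (boxForm k a) := by
  have ha : a ≠ [] := by
    intro h
    subst h
    simp at hlen
    omega
  obtain ⟨hU, hD, hL⟩ := counts_boxForm k a ha
  have hprod : 1 ≤ (k+2)*n := Nat.mul_pos (by omega) hn
  have hfin : (k+2) * a.length ≤ 0 + a.sum + 1 := by
    rw [hlen]
    generalize hP : (k+2)*n = P at hsum hprod ⊢
    omega
  have hsd : SDpre 0 (boxForm k a) := by
    rw [SDpre_boxForm k a ha 0]
    refine ⟨?_, hfin⟩
    intro j hj1 hj2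
    rw [hlen] at hj2
    have := hpart j hj1 hj2
    omega
  refine ⟨⟨?_, ?_, ?_, ?_⟩, ?_, ?_⟩
  · intro p hp
    have := hsd p hp
    omega
  · rw [hU, hL, hlen]
    have e : (k+2)*n = (k+1)*n + n := by ring
    rw [hlen] at hD
    generalize hP : (k+1)*n = P at hD e
    generalize hQ : (k+2)*n = Q at hsum e hprod
    omega
  · exact (no_factor_of_chain' (chain'_boxForm k hk a)).1
  · exact (no_factor_of_chain' (chain'_boxForm k hk a)).2
  · rw [semilength, hU, hsum]
  · rw [numOcc_boxForm k hk a ha hpos, hlen]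

end Backward

section Reconstruct

/-- gaps between occurrence positions, converted to the `a`-sequence -/
def gapsA (k : ℕ) : ℕ → List ℕ → List ℕ
  | _, [] => []
  | off, i :: r => (i - off + 1) :: gapsA k (i + k + 3) r

lemma gapsA_length (k : ℕ) : ∀ (off : ℕ) (l : List ℕ), (gapsA k off l).length = l.length := by
  intro off l
  induction l generalizing off with
  | nil => simp [gapsA]
  | cons i r ih => simp [gapsA, ih]

lemma gapsA_pos (k : ℕ) : ∀ (off : ℕ) (l : List ℕ) (z : ℕ), z ∈ gapsA k off l → 1 ≤ z := by
  intro off l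
  induction l generalizing off with
  | nil => simp [gapsA]
  | cons i r ih =>
    intro z hz
    simp only [gapsA, List.mem_cons] at hz
    rcases hz with rfl | hz
    · omega
    · exact ih _ z hz

lemma chain'_ge (k : ℕ) : ∀ (l : List ℕ) (i : ℕ),
    List.Chain' (fun u v => u + k + 3 ≤ v) (i :: l) → ∀ j ∈ i :: l, i ≤ j := by
  intro l
  induction l with
  | nil => simp
  | cons b t ih =>
    intro i h j hj
    simp only [List.Chain', List.isChain_cons_cons] at h
    rcases List.mem_cons.mp hj with rfl | hj'
    · omega
    · have := ih b h.2 j hj'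
      omega

lemma take_replicate_of_class (w : List Step) (off i : ℕ) (hoff : off ≤ i)
    (hilen : i ≤ w.length)
    (hcls : ∀ p, off ≤ p → p < i → w[p]? = some Step.U) :
    (w.drop off).take (i - off) = List.replicate (i - off) Step.U := by
  rw [List.eq_replicate_iff]
  constructor
  · rw [List.length_take, List.length_drop]
    omega
  · intro b hb
    obtain ⟨q, hq⟩ := List.mem_iff_getElem?.mp hb
    have hqlt : q < i - off := by
      by_contra hc
      rw [List.getElem?_take_eq_none (by omega)] at hq
      cases hq
    rw [List.getElem?_take_of_lt hqlt, List.getElem?_drop] at hq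
    have := hcls (off + q) (by omega) (by omega)
    rw [this] at hq
    exact (Option.some_inj.mp hq).symm

lemma reconstruct (k : ℕ) (w : List Step) : ∀ (rest : List ℕ) (i off : ℕ),
    off ≤ i →
    List.Chain' (fun u v => u + k + 3 ≤ v) (i :: rest) →
    (∀ j ∈ i :: rest, boxFactor k <+: w.drop j) →
    (∃ j ∈ i :: rest, j + (k + 2) = w.length) →
    (∀ p, off ≤ p → p < w.length → w[p]? ≠ some Step.U →
      ∃ j ∈ i :: rest, j + 1 ≤ p ∧ p ≤ j + k + 2) →
    (∀ j ∈ i :: rest, j + k + 2 < w.length → w[j + k + 2]? = some Step.D) →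
    w.drop off = boxForm k (gapsA k off (i :: rest)) := by
  intro rest
  induction rest with
  | nil =>
    intro i off hoff hchain hbox hflush hclass hfoll
    obtain ⟨j, hj, hjlen⟩ := hflush
    simp only [List.mem_singleton] at hj
    subst hj
    have hbi := hbox j (by simp)
    have hlen : w.length = j + k + 2 := by omega
    have hcls : ∀ p, off ≤ p → p < j → w[p]? = some Step.U := by
      intro p hp1 hp2
      by_contra hc
      obtain ⟨j', hj', h1, h2⟩ := hclass p hp1 (by omega) hc
      simp only [List.mem_singleton] at hj'
      omega
    have htake := take_replicate_of_class w off j hoff (by omega) hcls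
    have hdropj : w.drop j = boxFactor k := by
      refine (hbi.eq_of_length ?_).symm
      rw [boxFactor_length, List.length_drop]
      omega
    calc w.drop off = (w.drop off).take (j - off) ++ w.drop (off + (j - off)) :=
          (List.drop_take_append_drop w off (j - off)).symm
    _ = List.replicate (j - off) Step.U ++ boxFactor k := by
        rw [htake, show off + (j - off) = j by omega, hdropj]
    _ = boxForm k (gapsA k off [j]) := by
        simp only [gapsA]
        rw [boxForm_eq_replicate_append_boxFactor k _ (by omega),
          show j - off + 1 - 1 = j - off by omega]
  | cons j rest' ih =>
    intro i off hoff hchain hbox hflush hclass hfoll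
    have hge := chain'_ge k (j :: rest') i hchain
    simp only [List.Chain', List.isChain_cons_cons] at hchain
    obtain ⟨hgap, hchain'⟩ := hchain
    have hjlen : j + (k+2) ≤ w.length := occ_le_len (hbox j (by simp))
    have hilen : i + k + 2 < w.length := by omega
    have htail : w.drop (i + k + 3) = boxForm k (gapsA k (i + k + 3) (j :: rest')) := by
      refine ih j (i+k+3) (by omega) hchain' ?_ ?_ ?_ ?_
      · intro j' hj'
        exact hbox j' (by simp [hj'])
      · obtain ⟨j', hj', hl⟩ := hflush
        refine ⟨j', ?_, hl⟩
        simp only [List.mem_cons] at hj'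
        rcases hj' with rfl | hj'
        · omega
        · simpa using hj'
      · intro p hp1 hp2 hp3
        obtain ⟨j', hj', h1, h2⟩ := hclass p (by omega) hp2 hp3
        simp only [List.mem_cons] at hj'
        rcases hj' with rfl | hj'
        · omega
        · exact ⟨j', by simpa using hj', h1, h2⟩
      · intro j' hj' hlt
        exact hfoll j' (by simp [hj']) hlt
    have hcls : ∀ p, off ≤ p → p < i → w[p]? = some Step.U := by
      intro p hp1 hp2
      by_contra hc
      obtain ⟨j', hj', h1, h2⟩ := hclass p hp1 (by omega) hc
      have := hge j' hj'
      omega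
    have hpre := hbox i (by simp)
    have h1 : (w.drop i).take (k+2) = boxFactor k := by
      have := List.prefix_iff_eq_take.mp hpre
      rw [boxFactor_length] at this
      exact this.symm
    have hDel : (w.drop i)[k+2]? = some Step.D := by
      rw [List.getElem?_drop, show i + (k+2) = i + k + 2 by omega]
      exact hfoll i (by simp) hilen
    have h2 : (w.drop i).take (k+3) = boxFactor k ++ [Step.D] := by
      rw [show k+3 = (k+2)+1 from rfl, List.take_succ, h1, hDel]
      rfl
    have hfront : w.drop i = (boxFactor k ++ [Step.D]) ++ w.drop (i + k + 3) := by
      calc w.drop i = (w.drop i).take (k+3) ++ w.drop (i + (k+3)) :=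
            (List.drop_take_append_drop w i (k+3)).symm
      _ = _ := by rw [h2, show i + (k+3) = i + k + 3 by omega]
    calc w.drop off = (w.drop off).take (i - off) ++ w.drop (off + (i - off)) :=
          (List.drop_take_append_drop w off (i - off)).symm
    _ = List.replicate (i - off) Step.U ++ ((boxFactor k ++ [Step.D]) ++ w.drop (i + k + 3)) := by
        rw [take_replicate_of_class w off i hoff (by omega) hcls,
          show off + (i - off) = i by omega, hfront]
    _ = boxForm k (gapsA k off (i :: j :: rest')) := by
        rw [htail]
        simp only [gapsA]
        rw [boxForm_cons_cons]
        rw [show (i - off + 1) = (i - off) + 1 from rfl, List.replicate_succ']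
        simp [boxFactor]

end Reconstruct

section Forward

theorem boxPath_structure (k n : ℕ) (hk : 1 ≤ k) (hn : 1 ≤ n) (w : List Step)
    (hw : IsBoxPath k n w) :
    ∃ a : List ℕ, a.length = n ∧ (∀ z ∈ a, 1 ≤ z) ∧
      (∀ j, 1 ≤ j → j < n → (k+2)*j ≤ (a.take j).sum) ∧
      a.sum = (k+2)*n - 1 ∧ boxForm k a = w := by
  classical
  obtain ⟨⟨hpre, hbal, hUL, hLU⟩, hsemi, hocc⟩ := hw
  rw [numOccurrences] at hocc
  rw [semilength] at hsemi
  set len := w.length with hlendef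
  set O := (Finset.range (len + 1)).filter (fun i => boxFactor k <+: w.drop i) with hOdef
  have hOcard : O.card = n := hocc
  have hOmem : ∀ i ∈ O, boxFactor k <+: w.drop i := by
    intro i hi
    exact (Finset.mem_filter.mp hi).2
  have hlen2 : len = 2 * countU w := by
    have := length_eq_counts w
    omega
  have hprod : 1 ≤ (k+2)*n := Nat.mul_pos (by omega) hn
  have hs : countU w + 1 = (k+2)*n := by
    generalize hP : (k+2)*n = P at hsemi hprod
    omega
  -- pointwise no-LU
  have hLUpt : ∀ p c, w[p]? = some Step.L → w[p+1]? = some c → c ≠ Step.U := by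
    intro p c h1 h2
    rintro rfl
    exact hLU (pair_infix h1 h2)
  -- separation
  have hsep : ∀ i ∈ O, ∀ i' ∈ O, i < i' → i + (k+2) ≤ i' := by
    intro i hi i' hi' hlt
    by_contra hc
    have hU := occ_U (hOmem i' hi')
    rcases le_or_gt (i' - i) k with hdk | hdk
    · have hD := occ_D (hOmem i hi) (d := i' - i) (by omega) hdk
      rw [show i + (i' - i) = i' by omega] at hD
      rw [hD] at hU
      simp at hU
    · have hL := occ_L (hOmem i hi)
      rw [show i + (k+1) = i' by omega] at hL
      rw [hL] at hU
      simp at hU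
  -- target set
  set T := ((Finset.range len).filter (fun p => ¬(w[p]? = some Step.U))) ∪ {len} with hTdef
  have hTcard : T.card = (len - countU w) + 1 := by
    rw [hTdef, Finset.card_union_of_disjoint (by simp)]
    have hsplit := Finset.card_filter_add_card_filter_not
      (s := Finset.range len) (p := fun p => w[p]? = some Step.U)
    have hcnt := count_eq_card_filter w Step.U
    simp only [Finset.card_range] at hsplit
    have : countU w = ((Finset.range len).filter (fun p => w[p]? = some Step.U)).card := hcnt
    simp only [Finset.card_singleton]
    omega
  set S := O ×ˢ Finset.range (k+2) with hSdef
  set f : ℕ × ℕ → ℕ := fun q => q.1 + 1 + q.2 with hfdef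
  have hSmem : ∀ q : ℕ × ℕ, q ∈ S → q.1 ∈ O ∧ q.2 < k + 2 := by
    intro q hq
    rw [hSdef, Finset.mem_product] at hq
    exact ⟨hq.1, Finset.mem_range.mp hq.2⟩
  have hinj : Set.InjOn f S := by
    intro q hq q' hq' heq
    obtain ⟨h1, h2⟩ := hSmem q (by simpa using hq)
    obtain ⟨h1', h2'⟩ := hSmem q' (by simpa using hq')
    rcases lt_trichotomy q.1 q'.1 with h | h | h
    · have := hsep _ h1 _ h1' h
      simp only [hfdef] at heq
      omega
    · have : q.2 = q'.2 := by
        simp only [hfdef] at heq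
        omega
      exact Prod.ext h this
    · have := hsep _ h1' _ h1 h
      simp only [hfdef] at heq
      omega
  have hmaps : ∀ q ∈ S, f q ∈ T := by
    intro q hq
    obtain ⟨h1, h2⟩ := hSmem q hq
    have hfit : q.1 + (k+2) ≤ len := occ_le_len (hOmem _ h1)
    rcases eq_or_lt_of_le (show f q ≤ len by simp only [hfdef]; omega) with he | hlt
    · rw [hTdef]
      apply Finset.mem_union_right
      simp [he]
    · rw [hTdef]
      apply Finset.mem_union_left
      rw [Finset.mem_filter, Finset.mem_range]
      refine ⟨hlt, ?_⟩
      rcases show (1 ≤ q.2 + 1 ∧ q.2 + 1 ≤ k) ∨ q.2 + 1 = k + 1 ∨ q.2 = k + 1 by omega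
        with hmid | hlast | hfol
      · have hD := occ_D (hOmem _ h1) hmid.1 hmid.2
        rw [show q.1 + (q.2 + 1) = f q by simp only [hfdef]; omega] at hD
        rw [hD]
        simp
      · have hL := occ_L (hOmem _ h1)
        rw [show q.1 + (k + 1) = f q by simp only [hfdef]; omega] at hL
        rw [hL]
        simp
      · have hL := occ_L (hOmem _ h1)
        intro hc
        have : f q = (q.1 + (k+1)) + 1 := by simp only [hfdef]; omega
        rw [this] at hc
        exact hLUpt _ _ hL hc rfl
  have hScard : S.card = n * (k + 2) := by
    rw [hSdef, Finset.card_product, hOcard, Finset.card_range]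
  have himgcard : (S.image f).card = n * (k+2) := by
    rw [Finset.card_image_of_injOn hinj, hScard]
  have hTcard' : T.card = n * (k+2) := by
    rw [hTcard]
    have e : (k+2) * n = n * (k+2) := by ring
    generalize hP : n * (k+2) = P at e ⊢
    omega
  have himg : S.image f = T := by
    apply Finset.eq_of_subset_of_card_le
    · intro x hx
      obtain ⟨q, hq, rfl⟩ := Finset.mem_image.mp hx
      exact hmaps q hq
    · rw [himgcard, hTcard']
  -- flush
  have hflushO : ∃ i0 ∈ O, i0 + (k+2) = len := by
    have hmemT : len ∈ T := by
      rw [hTdef]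
      exact Finset.mem_union_right _ (by simp)
    rw [← himg] at hmemT
    obtain ⟨q, hq, heq⟩ := Finset.mem_image.mp hmemT
    obtain ⟨h1, h2⟩ := hSmem q hq
    have hfit : q.1 + (k+2) ≤ len := occ_le_len (hOmem _ h1)
    refine ⟨q.1, h1, ?_⟩
    simp only [hfdef] at heq
    omega
  -- classification
  have hclassO : ∀ p, p < len → w[p]? ≠ some Step.U → ∃ i ∈ O, i + 1 ≤ p ∧ p ≤ i + k + 2 := by
    intro p hp hpU
    have hmemT : p ∈ T := by
      rw [hTdef]
      apply Finset.mem_union_left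
      rw [Finset.mem_filter, Finset.mem_range]
      exact ⟨hp, hpU⟩
    rw [← himg] at hmemT
    obtain ⟨q, hq, heq⟩ := Finset.mem_image.mp hmemT
    obtain ⟨h1, h2⟩ := hSmem q hq
    refine ⟨q.1, h1, ?_, ?_⟩ <;> simp only [hfdef] at heq <;> omega
  -- letters within a box
  have hboxletter : ∀ i ∈ O, ∀ p, i ≤ p → p ≤ i + k + 1 → w[p]? = some Step.L →
      p = i + k + 1 := by
    intro i hi p hp1 hp2 hpL
    by_contra hc
    rcases Nat.eq_or_lt_of_le hp1 with he | hlt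
    · have := occ_U (hOmem i hi)
      rw [he, hpL] at this
      simp at this
    · have hD := occ_D (hOmem i hi) (d := p - i) (by omega) (by omega)
      rw [show i + (p - i) = p by omega, hpL] at hD
      simp at hD
  -- followers are D
  have hfollO : ∀ i ∈ O, i + k + 2 < len → w[i + k + 2]? = some Step.D := by
    intro i hi hlt
    obtain ⟨c, hc⟩ : ∃ c, w[i + k + 2]? = some c := by
      have : i + k + 2 < w.length := hlt
      exact ⟨w[i+k+2], List.getElem?_eq_getElem this⟩
    have hL := occ_L (hOmem i hi)
    have hcU : c ≠ Step.U := by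
      apply hLUpt (i + (k+1)) c hL
      rw [show i + (k+1) + 1 = i + k + 2 by omega]
      exact hc
    have hcL : c ≠ Step.L := by
      rintro rfl
      rcases eq_or_lt_of_le (show i + k + 2 + 1 ≤ len by omega) with he | hlt2
      · obtain ⟨i0, hi0, hi0len⟩ := hflushO
        have : i0 = i + 1 := by omega
        subst this
        have hU := occ_U (hOmem _ hi0)
        have hD := occ_D (hOmem i hi) (d := 1) (by omega) (by omega)
        rw [hU] at hD
        simp at hD
      · obtain ⟨c', hc'⟩ : ∃ c', w[i + k + 2 + 1]? = some c' := by
          exact ⟨w[i+k+2+1], List.getElem?_eq_getElem hlt2⟩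
        have hc'U : c' ≠ Step.U := hLUpt _ _ hc hc'
        obtain ⟨i', hi', h1, h2⟩ := hclassO (i + k + 2 + 1) hlt2 (by rw [hc']; simp [hc'U])
        have hpL : w[i + k + 2]? = some Step.L := hc
        have := hboxletter i' hi' (i + k + 2) (by omega) (by omega) hpL
        have : i' = i + 1 := by omega
        subst this
        have hU := occ_U (hOmem _ hi')
        have hD := occ_D (hOmem i hi) (d := 1) (by omega) (by omega)
        rw [hU] at hD
        simp at hD
    cases c with
    | U => exact absurd rfl hcU
    | L => exact absurd rfl hcL
    | D => exact hc
  -- sorted occurrence list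
  set is := O.sort (· ≤ ·) with hisdef
  have hislen : is.length = n := by rw [hisdef, Finset.length_sort, hOcard]
  have hismem : ∀ x, x ∈ is ↔ x ∈ O := fun x => Finset.mem_sort _
  have hpairlt : is.Pairwise (· < ·) := (Finset.sortedLT_sort O).pairwise
  have hpairgap : is.Pairwise (fun u v => u + k + 3 ≤ v) := by
    refine List.Pairwise.imp_of_mem ?_ hpairlt
    intro a b ha hb hab
    have haO := (hismem a).mp ha
    have hbO := (hismem b).mp hb
    have h1 := hsep a haO b hbO hab
    have hbfit : b + (k+2) ≤ len := occ_le_len (hOmem _ hbO)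
    by_contra hc
    have hbeq : b = a + k + 2 := by omega
    have hD := hfollO a haO (by omega)
    have hU := occ_U (hOmem b hbO)
    rw [hbeq] at hU
    rw [hU] at hD
    simp at hD
  have hchain : List.Chain' (fun u v => u + k + 3 ≤ v) is := hpairgap.isChain
  rcases his : is with _ | ⟨i, rest⟩
  · rw [his] at hislen
    simp at hislen
    omega
  rw [his] at hchain hislen
  have hismem' : ∀ x, x ∈ i :: rest ↔ x ∈ O := by
    intro x
    rw [← his]
    exact hismem x
  have hrecon := reconstruct k w rest i 0 (Nat.zero_le _) hchain
    (fun j hj => hOmem j ((hismem' j).mp hj))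
    (by
      obtain ⟨i0, hi0, hi0len⟩ := hflushO
      exact ⟨i0, (hismem' i0).mpr hi0, by omega⟩)
    (by
      intro p _ hp2 hp3
      obtain ⟨i', hi', h1, h2⟩ := hclassO p hp2 hp3
      exact ⟨i', (hismem' i').mpr hi', h1, h2⟩)
    (fun j hj hlt => hfollO j ((hismem' j).mp hj) hlt)
  rw [List.drop_zero] at hrecon
  set a := gapsA k 0 (i :: rest) with hadef
  have halen : a.length = n := by
    rw [hadef, gapsA_length]
    simpa using hislen
  have hane : a ≠ [] := by
    rw [hadef, gapsA]
    simp
  have hapos : ∀ z ∈ a, 1 ≤ z := fun z hz => gapsA_pos k 0 (i :: rest) z (hadef ▸ hz)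
  obtain ⟨hU, hD, hL⟩ := counts_boxForm k a hane
  have hasum : a.sum = (k+2)*n - 1 := by
    rw [← hU, ← hrecon]
    exact hsemi
  have hsd : SDpre 0 w := by
    intro p hp
    have := hpre p hp
    omega
  rw [hrecon] at hsd
  have hconds := (SDpre_boxForm k a hane 0).mp hsd
  refine ⟨a, halen, hapos, ?_, hasum, hrecon.symm⟩
  intro j hj1 hj2
  have := hconds.1 j hj1 (by omega)
  omega

end Forward

section KtSide

def ktForm : List ℕ → List Bool
  | [] => []
  | [x] => List.replicate x true
  | x :: y :: r => List.replicate x true ++ false :: ktForm (y :: r)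

def parseKt : List Bool → List ℕ
  | [] => [0]
  | true :: w =>
    match parseKt w with
    | [] => [0]
    | x :: r => (x+1) :: r
  | false :: w => 0 :: parseKt w

lemma parseKt_ne_nil (w : List Bool) : parseKt w ≠ [] := by
  cases w with
  | nil => simp [parseKt]
  | cons b t =>
    cases b
    · simp [parseKt]
    · cases h : parseKt t <;> simp [parseKt, h]

lemma ktForm_cons_succ (x : ℕ) (r : List ℕ) :
    ktForm ((x+1) :: r) = true :: ktForm (x :: r) := by
  cases r with
  | nil => simp [ktForm, List.replicate_succ]
  | cons y t => simp [ktForm, List.replicate_succ]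

lemma ktForm_cons_zero (r : List ℕ) (hr : r ≠ []) :
    ktForm (0 :: r) = false :: ktForm r := by
  cases r with
  | nil => exact absurd rfl hr
  | cons y t => simp [ktForm]

lemma ktForm_parseKt (w : List Bool) : ktForm (parseKt w) = w := by
  induction w with
  | nil => simp [parseKt, ktForm]
  | cons b t ih =>
    cases b
    · rw [show parseKt (false :: t) = 0 :: parseKt t from rfl,
        ktForm_cons_zero _ (parseKt_ne_nil t), ih]
    · cases h : parseKt t with
      | nil => exact absurd h (parseKt_ne_nil t)
      | cons x r =>
        rw [show parseKt (true :: t) = (x+1) :: r by simp [parseKt, h],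
          ktForm_cons_succ, ← h, ih]

lemma parseKt_length (w : List Bool) : (parseKt w).length = w.count false + 1 := by
  induction w with
  | nil => simp [parseKt]
  | cons b t ih =>
    cases b
    · simp [parseKt, List.count_cons, ih]
    · cases h : parseKt t with
      | nil => exact absurd h (parseKt_ne_nil t)
      | cons x r =>
        rw [show parseKt (true :: t) = (x+1) :: r by simp [parseKt, h]]
        rw [h] at ih
        simp [List.count_cons] at ih ⊢
        omega

lemma ktForm_count_true : ∀ (e : List ℕ), (ktForm e).count true = e.sum := by
  intro e
  induction e with
  | nil => simp [ktForm]
  | cons x r ih =>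
    cases r with
    | nil => simp [ktForm]
    | cons y t =>
      rw [show ktForm (x :: y :: t) = List.replicate x true ++ false :: ktForm (y :: t)
        from rfl]
      simp [List.count_append, List.count_cons, ih]

lemma ktForm_count_false : ∀ (e : List ℕ), e ≠ [] → (ktForm e).count false + 1 = e.length := by
  intro e
  induction e with
  | nil => intro h; exact absurd rfl h
  | cons x r ih =>
    intro _
    cases r with
    | nil => simp [ktForm, List.count_replicate]
    | cons y t =>
      rw [show ktForm (x :: y :: t) = List.replicate x true ++ false :: ktForm (y :: t)
        from rfl]
      have := ih (by simp)
      simp [List.count_append, List.count_cons, List.count_replicate] at this ⊢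
      omega

/-- prefix condition with slack for `K_t` paths, in ℕ form -/
def KTpre (k t : ℕ) (w : List Bool) : Prop :=
  ∀ p, p <+: w → (k+1) * p.count false ≤ p.count true + t

lemma KTpre_nil (k t : ℕ) : KTpre k t [] := by
  intro p hp
  rw [List.prefix_nil.mp hp]
  simp

lemma KTpre_replicate_true {k t x : ℕ} {w : List Bool} :
    KTpre k t (List.replicate x true ++ w) ↔ KTpre k (t + x) w := by
  constructor
  · intro H p hp
    have := H (List.replicate x true ++ p) ((List.prefix_append_right_inj _).mpr hp)
    simp only [List.count_append, List.count_replicate] at this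
    simp at this
    generalize hP : (k+1) * p.count false = P at this ⊢
    omega
  · intro H p hp
    rcases prefix_append_cases hp with h | ⟨r, hr, rfl⟩
    · have hf : p.count false = 0 := by
        rw [List.count_eq_zero]
        intro hc
        have := h.sublist.subset hc
        simpa using List.eq_of_mem_replicate this
      simp [hf]
    · have := H r hr
      simp only [List.count_append, List.count_replicate]
      simp
      generalize hP : (k+1) * r.count false = P at this ⊢
      omega

lemma KTpre_cons_false {k t : ℕ} {w : List Bool} :
    KTpre k t (false :: w) ↔ (k + 1 ≤ t ∧ KTpre k (t - (k+1)) w) := by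
  constructor
  · intro H
    have h1 := H [false] ⟨w, rfl⟩
    simp at h1
    refine ⟨by omega, ?_⟩
    intro p hp
    have := H (false :: p) (by
      rw [show (false :: p) = [false] ++ p from rfl, show (false :: w) = [false] ++ w from rfl]
      exact (List.prefix_append_right_inj [false]).mpr hp)
    simp only [List.count_cons] at this
    simp at this
    have e : (k+1) * (p.count false + 1) = (k+1) * p.count false + (k+1) := by ring
    rw [e] at this
    generalize hP : (k+1) * p.count false = P at this ⊢
    omega
  · rintro ⟨hx, H⟩ p hp
    rw [show (false :: w) = [false] ++ w from rfl] at hp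
    rcases prefix_append_cases hp with h | ⟨r, hr, rfl⟩
    · rcases h with ⟨t2, ht2⟩
      match p, ht2 with
      | [], _ => simp
      | [false], _ => simp; omega
    · have := H r hr
      simp only [List.count_append, List.count_cons]
      simp
      have e : (k+1) * (1 + r.count false) = (k+1) * r.count false + (k+1) := by ring
      rw [e]
      generalize hP : (k+1) * r.count false = P at this ⊢
      omega

lemma KTpre_ktForm (k : ℕ) : ∀ (e : List ℕ), e ≠ [] → ∀ t,
    (KTpre k t (ktForm e) ↔
      ∀ j, 1 ≤ j → j < e.length → (k+1)*j ≤ t + (e.take j).sum) := by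
  intro e
  induction e with
  | nil => intro h; exact absurd rfl h
  | cons x r ih =>
    intro _ t
    cases r with
    | nil =>
      rw [show ktForm [x] = List.replicate x true ++ [] by simp [ktForm],
        KTpre_replicate_true]
      constructor
      · intro _ j hj1 hj2
        simp at hj2
        omega
      · intro _
        exact KTpre_nil k (t + x)
    | cons y r' =>
      rw [show ktForm (x :: y :: r') = List.replicate x true ++ false :: ktForm (y :: r')
          from rfl,
        KTpre_replicate_true, KTpre_cons_false, ih (by simp)]
      constructor
      · rintro ⟨h1, hC⟩
        intro j hj1 hj2
        obtain ⟨j', rfl⟩ : ∃ j', j = 1 + j' := ⟨j - 1, by omega⟩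
        cases j' with
        | zero =>
          simp
          omega
        | succ m =>
          have hc := hC (m+1) (by omega) (by simp at hj2 ⊢; omega)
          have e2 : (x :: y :: r').take (1 + (m+1)) = x :: ((y :: r').take (m+1)) := by
            rw [Nat.add_comm, List.take_succ_cons]
          rw [e2]
          have e1 : (k+1) * (1 + (m+1)) = (k+1) * (m+1) + (k+1) := by ring
          rw [e1]
          simp only [List.sum_cons]
          generalize (k+1) * (m+1) = P at hc ⊢
          omega
      · intro hC
        have hg : k + 1 ≤ t + x := by
          have := hC 1 (by omega) (by simp)
          simpa using this
        refine ⟨hg, ?_⟩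
        intro j hj1 hj2
        have hc := hC (j+1) (by omega) (by simp at hj2 ⊢; omega)
        have e2 : (x :: y :: r').take (j+1) = x :: ((y :: r').take j) := List.take_succ_cons
        rw [e2] at hc
        have e1 : (k+1) * (j + 1) = (k+1) * j + (k+1) := by ring
        rw [e1] at hc
        simp only [List.sum_cons] at hc
        generalize (k+1) * j = P at hc ⊢
        omega

lemma isKtDyck_ktForm (k m : ℕ) (e : List ℕ) (hlen : e.length = m + 1)
    (hpart : ∀ j, 1 ≤ j → j ≤ m → (k+1)*j ≤ k + (e.take j).sum)
    (hsum : e.sum = (k+1) * m) :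
    IsKtDyck (k+1) k m (ktForm e) := by
  have hne : e ≠ [] := by
    intro h
    rw [h] at hlen
    simp at hlen
  refine ⟨?_, ?_, ?_⟩
  · rw [ktForm_count_true, hsum]
  · have := ktForm_count_false e hne
    omega
  · have hKT : KTpre k k (ktForm e) := by
      rw [KTpre_ktForm k e hne k]
      intro j hj1 hj2
      have := hpart j hj1 (by omega)
      generalize hP : (k+1) * j = P at this ⊢
      omega
    intro p hp
    have := hKT p hp
    have hz : ((k:ℤ)+1) * (p.count false : ℤ) ≤ (p.count true : ℤ) + k := by exact_mod_cast this
    push_cast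
    linarith

lemma ktDyck_structure (k m : ℕ) (w : List Bool) (hw : IsKtDyck (k+1) k m w) :
    ∃ e : List ℕ, e.length = m + 1 ∧
      (∀ j, 1 ≤ j → j ≤ m → (k+1)*j ≤ k + (e.take j).sum) ∧
      e.sum = (k+1) * m ∧ ktForm e = w := by
  obtain ⟨hct, hcf, hpre⟩ := hw
  have hform := ktForm_parseKt w
  have hlen : (parseKt w).length = m + 1 := by rw [parseKt_length, hcf]
  have hsum : (parseKt w).sum = (k+1) * m := by
    have := ktForm_count_true (parseKt w)
    rw [hform] at this
    omega
  have hKT : KTpre k k w := by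
    intro p hp
    have h := hpre p hp
    have hz : ((k:ℤ)+1) * (p.count false : ℤ) ≤ (p.count true : ℤ) + k := by
      push_cast at h
      linarith
    exact_mod_cast hz
  rw [← hform] at hKT
  rw [KTpre_ktForm k (parseKt w) (parseKt_ne_nil w) k] at hKT
  refine ⟨parseKt w, hlen, ?_, hsum, hform⟩
  intro j hj1 hj2
  have := hKT j hj1 (by omega)
  generalize hP : (k+1) * j = P at this ⊢
  omega

end KtSide

section Transfer

def CondA (k n : ℕ) (a : List ℕ) : Prop :=
  a.length = n ∧ (∀ z ∈ a, 1 ≤ z) ∧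
  (∀ j, 1 ≤ j → j < n → (k+2)*j ≤ (a.take j).sum) ∧ a.sum = (k+2)*n - 1

def CondB (k m : ℕ) (e : List ℕ) : Prop :=
  e.length = m + 1 ∧ (∀ j, 1 ≤ j → j ≤ m → (k+1)*j ≤ k + (e.take j).sum) ∧ e.sum = (k+1)*m

lemma replicate_true_append_inj : ∀ (x x' : ℕ) (l l' : List Bool),
    List.replicate x true ++ l = List.replicate x' true ++ l' →
    l.head? ≠ some true → l'.head? ≠ some true → x = x' ∧ l = l' := by
  intro x
  induction x with
  | zero =>
    intro x' l l' h hl hl'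
    cases x' with
    | zero => simpa using h
    | succ m =>
      exfalso
      rw [List.replicate_succ] at h
      simp at h
      rw [h] at hl
      simp at hl
  | succ m ih =>
    intro x' l l' h hl hl'
    cases x' with
    | zero =>
      exfalso
      rw [List.replicate_succ] at h
      simp at h
      rw [← h] at hl'
      simp at hl'
    | succ m' =>
      rw [List.replicate_succ, List.replicate_succ] at h
      simp at h
      obtain ⟨h1, h2⟩ := ih m' l l' h hl hl'
      exact ⟨by omega, h2⟩

lemma ktForm_inj : ∀ (e e' : List ℕ), e ≠ [] → e' ≠ [] → ktForm e = ktForm e' → e = e' := by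
  intro e
  induction e with
  | nil => intro e' h; exact absurd rfl h
  | cons x t ih =>
    intro e' _ he' h
    cases e' with
    | nil => exact absurd rfl he'
    | cons x' t' =>
      cases t with
      | nil =>
        cases t' with
        | nil =>
          have := congrArg List.length h
          simp [ktForm] at this
          rw [this]
        | cons y' r' =>
          exfalso
          rw [show ktForm [x] = List.replicate x true ++ [] by simp [ktForm],
            show ktForm (x' :: y' :: r') =
              List.replicate x' true ++ false :: ktForm (y' :: r') from rfl] at h
          obtain ⟨-, h2⟩ := replicate_true_append_inj x x' _ _ h (by simp) (by simp)
          cases h2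
      | cons y r =>
        cases t' with
        | nil =>
          exfalso
          rw [show ktForm [x'] = List.replicate x' true ++ [] by simp [ktForm],
            show ktForm (x :: y :: r) =
              List.replicate x true ++ false :: ktForm (y :: r) from rfl] at h
          obtain ⟨-, h2⟩ := replicate_true_append_inj x x' _ _ h (by simp) (by simp)
          cases h2
        | cons y' r' =>
          rw [show ktForm (x :: y :: r) =
              List.replicate x true ++ false :: ktForm (y :: r) from rfl,
            show ktForm (x' :: y' :: r') =
              List.replicate x' true ++ false :: ktForm (y' :: r') from rfl] at h
          obtain ⟨h1, h2⟩ := replicate_true_append_inj x x' _ _ h (by simp) (by simp)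
          simp only [List.cons.injEq] at h2
          have := ih (y' :: r') (by simp) (by simp) h2.2
          rw [h1, this]

lemma sum_map_succ (l : List ℕ) : (l.map (· + 1)).sum = l.sum + l.length := by
  induction l with
  | nil => simp
  | cons a t ih => simp [ih]; omega

lemma sum_map_pred (l : List ℕ) (h : ∀ z ∈ l, 1 ≤ z) :
    (l.map (· - 1)).sum + l.length = l.sum := by
  induction l with
  | nil => simp
  | cons a t ih =>
    have ha := h a (by simp)
    have := ih (fun z hz => h z (by simp [hz]))
    simp
    omega

def AofB (k : ℕ) : List ℕ → List ℕ
  | [] => []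
  | x :: t => (x + (k+1)) :: t.map (· + 1)

def BofA (k : ℕ) : List ℕ → List ℕ
  | [] => []
  | x :: t => (x - (k+1)) :: t.map (· - 1)

lemma BofA_AofB (k : ℕ) (e : List ℕ) : BofA k (AofB k e) = e := by
  cases e with
  | nil => simp [AofB, BofA]
  | cons x t =>
    simp only [AofB, BofA, List.map_map]
    congr 1
    · omega
    · conv_rhs => rw [← List.map_id t]
      apply List.map_congr_left
      intro z _
      simp

lemma take_sum_AofB (k x : ℕ) (t : List ℕ) (j : ℕ) (hj : 1 ≤ j) (hjle : j ≤ t.length + 1) :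
    ((AofB k (x :: t)).take j).sum = ((x :: t).take j).sum + (k+1) + (j - 1) := by
  obtain ⟨j', rfl⟩ : ∃ j', j = j' + 1 := ⟨j - 1, by omega⟩
  simp only [AofB, List.take_succ_cons, List.sum_cons]
  rw [← List.map_take, sum_map_succ, List.length_take]
  have : min j' t.length = j' := by omega
  rw [this]
  omega

lemma take_sum_BofA (k x : ℕ) (t : List ℕ) (j : ℕ) (hpos : ∀ z ∈ t, 1 ≤ z) (hx : k + 1 ≤ x)
    (hj : 1 ≤ j) (hjle : j ≤ t.length + 1) :
    ((BofA k (x :: t)).take j).sum + (k+1) + (j - 1) = ((x :: t).take j).sum := by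
  obtain ⟨j', rfl⟩ : ∃ j', j = j' + 1 := ⟨j - 1, by omega⟩
  simp only [BofA, List.take_succ_cons, List.sum_cons]
  rw [← List.map_take, ]
  have hsub := sum_map_pred (t.take j') (fun z hz => hpos z (List.mem_of_mem_take hz))
  rw [List.length_take] at hsub
  have : min j' t.length = j' := by omega
  rw [this] at hsub
  omega

lemma condA_head (k n : ℕ) (hn : 1 ≤ n) (a : List ℕ) (h : CondA k n a) :
    ∃ x t, a = x :: t ∧ k + 1 ≤ x := by
  obtain ⟨hlen, hpos, hpart, hsum⟩ := h
  cases a with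
  | nil => simp at hlen; omega
  | cons x t =>
    refine ⟨x, t, rfl, ?_⟩
    rcases eq_or_lt_of_le hn with h1 | h1
    · -- n = 1, t = []
      have ht : t = [] := by
        have : t.length = 0 := by simp at hlen; omega
        exact List.eq_nil_of_length_eq_zero this
      subst ht
      simp at hsum
      have e1 : (k+2) * n = (k+2) * 1 := by rw [← h1]
      have e2 : (k+2) * 1 = k + 2 := by ring
      omega
    · have := hpart 1 (by omega) h1
      simp at this
      omega

lemma AofB_BofA (k n : ℕ) (hn : 1 ≤ n) (a : List ℕ) (h : CondA k n a) :
    AofB k (BofA k a) = a := by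
  obtain ⟨x, t, rfl, hx⟩ := condA_head k n hn a h
  obtain ⟨-, hpos, -, -⟩ := h
  simp only [BofA, AofB, List.map_map]
  congr 1
  · omega
  · conv_rhs => rw [← List.map_id t]
    apply List.map_congr_left
    intro z hz
    have := hpos z (by simp [hz])
    simp
    omega

lemma condA_of_condB (k n : ℕ) (hn : 1 ≤ n) (e : List ℕ) (h : CondB k (n-1) e) :
    CondA k n (AofB k e) := by
  obtain ⟨hlen, hpart, hsum⟩ := h
  obtain ⟨m, hm⟩ : ∃ m, n = m + 1 := ⟨n - 1, by omega⟩
  rw [show n - 1 = m by omega] at hlen hpart hsum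
  cases e with
  | nil => simp at hlen
  | cons x t =>
    have htlen : t.length = m := by simpa using hlen
    refine ⟨?_, ?_, ?_, ?_⟩
    · simp [AofB]
      omega
    · intro z hz
      simp only [AofB, List.mem_cons] at hz
      rcases hz with rfl | hz
      · omega
      · obtain ⟨u, -, rfl⟩ := List.mem_map.mp hz
        omega
    · intro j hj1 hj2
      rw [take_sum_AofB k x t j hj1 (by omega)]
      have hp := hpart j hj1 (by omega)
      have e1 : (k+2)*j = (k+1)*j + j := by ring
      rw [e1]
      generalize (k+1)*j = P at hp ⊢
      omega
    · have hs : (AofB k (x :: t)).sum = (x :: t).sum + (k+1) + t.length := by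
        simp [AofB, sum_map_succ]
        omega
      rw [hs]
      simp only [List.sum_cons] at hsum ⊢
      have e1 : (k+2)*n = (k+1)*m + (m + k + 2) := by rw [hm]; ring
      generalize hP : (k+1)*m = P at hsum e1
      generalize hQ : (k+2)*n = Q at e1 ⊢
      omega

lemma condB_of_condA (k n : ℕ) (hn : 1 ≤ n) (a : List ℕ) (h : CondA k n a) :
    CondB k (n-1) (BofA k a) := by
  obtain ⟨x, t, rfl, hx⟩ := condA_head k n hn a h
  obtain ⟨hlen, hpos, hpart, hsum⟩ := h
  obtain ⟨m, hm⟩ : ∃ m, n = m + 1 := ⟨n - 1, by omega⟩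
  have htlen : t.length = m := by simp at hlen; omega
  have hpos' : ∀ z ∈ t, 1 ≤ z := fun z hz => hpos z (by simp [hz])
  rw [show n - 1 = m by omega]
  refine ⟨?_, ?_, ?_⟩
  · simp [BofA]
    omega
  · intro j hj1 hj2
    have hts := take_sum_BofA k x t j hpos' hx hj1 (by omega)
    have hp := hpart j hj1 (by omega)
    have e1 : (k+2)*j = (k+1)*j + j := by ring
    rw [e1] at hp
    generalize (k+1)*j = P at hp ⊢
    omega
  · have hs := sum_map_pred t hpos'
    simp only [BofA, List.sum_cons]
    simp only [List.sum_cons] at hsum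
    have e1 : (k+2)*n = (k+1)*m + (m + k + 2) := by rw [hm]; ring
    have hprod : 1 ≤ (k+2)*n := Nat.mul_pos (by omega) hn
    generalize hP : (k+1)*m = P at e1 ⊢
    generalize hQ : (k+2)*n = Q at e1 hsum hprod
    omega

end Transfer

/-- The number of `k`-box paths of size `n` equals the number of
`(k+1)_k`-Dyck paths of size `n-1`. -/
theorem statement6 (k n : ℕ) (hk : 1 ≤ k) (hn : 1 ≤ n) :
    Nat.card {w : List Step // IsBoxPath k n w} =
    Nat.card {w : List Bool // IsKtDyck (k+1) k (n-1) w} := by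
  have h1 : Nat.card {w : List Step // IsBoxPath k n w} =
      Nat.card {a : List ℕ // CondA k n a} := by
    apply Nat.card_congr
    apply Equiv.symm
    apply Equiv.ofBijective (f := fun (a : {a : List ℕ // CondA k n a}) =>
      (⟨boxForm k a.1, by
        obtain ⟨hl, hp, hc, hs⟩ := a.2
        exact isBoxPath_boxForm k n hk hn a.1 hl hp hc hs⟩ :
        {w : List Step // IsBoxPath k n w}))
    constructor
    · intro a a' h
      apply Subtype.ext
      exact boxForm_inj k hk _ _ (congrArg Subtype.val h)
    · intro w
      obtain ⟨a, hl, hp, hc, hs, heq⟩ := boxPath_structure k n hk hn w.1 w.2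
      exact ⟨⟨a, hl, hp, hc, hs⟩, Subtype.ext heq⟩
  have h2 : Nat.card {w : List Bool // IsKtDyck (k+1) k (n-1) w} =
      Nat.card {e : List ℕ // CondB k (n-1) e} := by
    apply Nat.card_congr
    apply Equiv.symm
    apply Equiv.ofBijective (f := fun (e : {e : List ℕ // CondB k (n-1) e}) =>
      (⟨ktForm e.1, by
        obtain ⟨hl, hp, hs⟩ := e.2
        exact isKtDyck_ktForm k (n-1) e.1 hl hp hs⟩ :
        {w : List Bool // IsKtDyck (k+1) k (n-1) w}))
    constructor
    · intro e e' h
      apply Subtype.ext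
      refine ktForm_inj e.1 e'.1 ?_ ?_ (congrArg Subtype.val h)
      · intro hnil
        have := e.2.1
        rw [hnil] at this
        simp at this
      · intro hnil
        have := e'.2.1
        rw [hnil] at this
        simp at this
    · intro w
      obtain ⟨e, hl, hp, hs, heq⟩ := ktDyck_structure k (n-1) w.1 w.2
      exact ⟨⟨e, hl, hp, hs⟩, Subtype.ext heq⟩
  have h3 : Nat.card {a : List ℕ // CondA k n a} =
      Nat.card {e : List ℕ // CondB k (n-1) e} := by
    apply Nat.card_congr
    exact
      { toFun := fun a => ⟨BofA k a.1, condB_of_condA k n hn a.1 a.2⟩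
        invFun := fun e => ⟨AofB k e.1, condA_of_condB k n hn e.1 e.2⟩
        left_inv := fun a => Subtype.ext (AofB_BofA k n hn a.1 a.2)
        right_inv := fun e => Subtype.ext (BofA_AofB k e.1) }
  omega
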